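/- (Uniqueness part of the Fundamental Theorem of Projective Geometry.) The maps A and B induce the same map on one-dimensional subspaces, i.e. L·B(x) = L·A(x) as L-subspaces of F for every nonzero x ∈ E, if and only if there exists a nonzero λ ∈ L such that B(x) = λA(x) for all x ∈ E; and in that case h(ρ) = λg(ρ)λ⁻¹ for all ρ ∈ K. -/

import Mathlib

/-- **Uniqueness part of the Fundamental Theorem of Projective Geometry.** Two
semilinear bijections `A` (w.r.t. `g`) and `B` (w.r.t. `h`) induce the same map
on one-dimensional subspaces iff `B = λ • A` for some nonzero `λ`, and in that
case `h(ρ) = λ g(ρ) λ⁻¹`. -/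
theorem fundamental_theorem_uniqueness
    {K L E F : Type*} [DivisionRing K] [DivisionRing L]
    [AddCommGroup E] [Module K E] [AddCommGroup F] [Module L F]
    (hdim : 3 ≤ Module.rank K E)
    (g h : K ≃+* L)
    (A B : E → F)
    (hAbij : Function.Bijective A) (hBbij : Function.Bijective B)
    (hAadd : ∀ x y : E, A (x + y) = A x + A y)
    (hBadd : ∀ x y : E, B (x + y) = B x + B y)
    (hAsmul : ∀ (ρ : K) (x : E), A (ρ • x) = g ρ • A x)
    (hBsmul : ∀ (ρ : K) (x : E), B (ρ • x) = h ρ • B x) :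
    ((∀ x : E, x ≠ 0 → Submodule.span L {B x} = Submodule.span L {A x}) ↔
      (∃ lam : L, lam ≠ 0 ∧ ∀ x : E, B x = lam • A x)) ∧
    (∀ lam : L, lam ≠ 0 → (∀ x : E, B x = lam • A x) →
      ∀ ρ : K, h ρ = lam * g ρ * lam⁻¹) := by
  -- basic facts
  have hA0 : A 0 = 0 := by
    have h0 := hAadd 0 0
    rw [add_zero] at h0
    exact (left_eq_add.mp h0)
  have hB0 : B 0 = 0 := by
    have h0 := hBadd 0 0
    rw [add_zero] at h0
    exact (left_eq_add.mp h0)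
  have hAne : ∀ x : E, x ≠ 0 → A x ≠ 0 := fun x hx hc =>
    hx (hAbij.injective (hc.trans hA0.symm))
  have hBne : ∀ x : E, x ≠ 0 → B x ≠ 0 := fun x hx hc =>
    hx (hBbij.injective (hc.trans hB0.symm))
  -- E is nontrivial
  have hnontriv : Nontrivial E := by
    by_contra hcon
    have : Subsingleton E := not_nontrivial_iff_subsingleton.mp hcon
    rw [rank_subsingleton'] at hdim
    exact absurd hdim (by norm_num)
  -- A sends K-independent pairs to L-independent pairs
  have indepA : ∀ x z : E, (∀ a b : K, a • x + b • z = 0 → a = 0 ∧ b = 0) →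
      ∀ a b : L, a • A x + b • A z = 0 → a = 0 ∧ b = 0 := by
    intro x z hind a b hab
    have h1 : A (g.symm a • x + g.symm b • z) = 0 := by
      rw [hAadd, hAsmul, hAsmul, g.apply_symm_apply, g.apply_symm_apply]; exact hab
    obtain ⟨ha, hb⟩ := hind _ _ (hAbij.injective (h1.trans hA0.symm))
    exact ⟨by simpa using congrArg g ha, by simpa using congrArg g hb⟩
  -- every nonzero x has an independent companion
  have companion : ∀ x : E, x ≠ 0 → ∃ z : E,
      ∀ a b : K, a • x + b • z = 0 → a = 0 ∧ b = 0 := by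
    intro x hx
    have hne : (Submodule.span K {x} : Submodule K E) ≠ ⊤ := by
      intro htop
      have h1 : Module.rank K E ≤ 1 := by
        have h2 := rank_span_le (R := K) (M := E) {x}
        rw [htop] at h2
        have h3 : Module.rank K (⊤ : Submodule K E) = Module.rank K E := rank_top K E
        rw [h3] at h2
        simpa using h2
      exact absurd (hdim.trans h1) (by norm_num)
    have hz : ∃ z : E, z ∉ Submodule.span K {x} := by
      by_contra hcon
      push_neg at hcon
      exact hne (Submodule.eq_top_iff'.mpr hcon)
    obtain ⟨z, hz⟩ := hz
    refine ⟨z, fun a b hab => ?_⟩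
    have hb : b = 0 := by
      by_contra hb
      apply hz
      rw [Submodule.mem_span_singleton]
      refine ⟨b⁻¹ * -a, ?_⟩
      have h2 : b • z = (-a) • x := by
        rw [neg_smul]
        exact eq_neg_of_add_eq_zero_right hab
      have := congrArg (fun v => b⁻¹ • v) h2
      simpa [smul_smul, inv_mul_cancel₀ hb] using this.symm
    subst hb
    rw [zero_smul, add_zero] at hab
    rcases smul_eq_zero.mp hab with ha | hxe
    · exact ⟨ha, rfl⟩
    · exact absurd hxe hx
  -- the multiplier exists for each nonzero x (under the span hypothesis)
  constructor
  · constructor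
    · intro hspan
      have mult : ∀ x : E, x ≠ 0 → ∃ a : L, a ≠ 0 ∧ B x = a • A x := by
        intro x hx
        have : B x ∈ Submodule.span L {A x} := by
          rw [← hspan x hx]; exact Submodule.mem_span_singleton_self _
        obtain ⟨a, ha⟩ := Submodule.mem_span_singleton.mp this
        refine ⟨a, ?_, ha.symm⟩
        intro h0
        subst h0
        rw [zero_smul] at ha
        exact hBne x hx ha.symm
      -- independent pairs have the same multiplier
      have same : ∀ x z : E, (∀ a b : K, a • x + b • z = 0 → a = 0 ∧ b = 0) →
          ∀ a b : L, B x = a • A x → B z = b • A z → a = b := by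
        intro x z hind a b hax hbz
        have hx : x ≠ 0 := by
          intro h0; subst h0
          have := (hind 1 0 (by simp)).1; simp at this
        have hz0 : z ≠ 0 := by
          intro h0; subst h0
          have := (hind 0 1 (by simp)).2; simp at this
        have hxz : x + z ≠ 0 := by
          intro h0
          have : (1 : K) • x + (1 : K) • z = 0 := by simpa using h0
          have := (hind 1 1 this).1; simp at this
        obtain ⟨c, hc0, hc⟩ := mult (x + z) hxz
        rw [hBadd, hAadd, smul_add, hax, hbz] at hc
        have heq : (a - c) • A x + (b - c) • A z = 0 := by
          have hsub : (a • A x + b • A z) - (c • A x + c • A z) = 0 :=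
            sub_eq_zero.mpr hc
          calc (a - c) • A x + (b - c) • A z
              = (a • A x + b • A z) - (c • A x + c • A z) := by
                rw [sub_smul, sub_smul]; abel
            _ = 0 := hsub
        obtain ⟨h1, h2⟩ := indepA x z hind _ _ heq
        rw [sub_eq_zero] at h1 h2
        rw [h1, h2]
      -- all nonzero vectors share the same multiplier
      obtain ⟨x₀, hx₀⟩ := exists_ne (0 : E)
      obtain ⟨lam, hlam0, hlam⟩ := mult x₀ hx₀
      refine ⟨lam, hlam0, fun x => ?_⟩
      rcases eq_or_ne x 0 with rfl | hx
      · rw [hA0, hB0, smul_zero]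
      obtain ⟨a, ha0, ha⟩ := mult x hx
      suffices hsuff : a = lam by rw [ha, hsuff]
      -- case on whether x, x₀ are independent
      by_cases hind : ∀ c d : K, c • x + d • x₀ = 0 → c = 0 ∧ d = 0
      · exact same x x₀ hind a lam ha hlam
      · -- x and x₀ are dependent: x₀ = ρ • x with ρ ≠ 0
        push_neg at hind
        obtain ⟨c, d, hcd, hne⟩ := hind
        have hc0 : c ≠ 0 := by
          intro h0; subst h0
          rw [zero_smul, zero_add] at hcd
          rcases smul_eq_zero.mp hcd with hd | hx0
          · exact hne rfl hd
          · exact hx₀ hx0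
        have hd0 : d ≠ 0 := by
          intro h0; subst h0
          rw [zero_smul, add_zero] at hcd
          rcases smul_eq_zero.mp hcd with hc | hx0
          · exact hne hc rfl
          · exact hx hx0
        have hx₀x : x₀ = (d⁻¹ * -c) • x := by
          have h2 : d • x₀ = (-c) • x := by
            rw [neg_smul, eq_neg_iff_add_eq_zero, add_comm]; exact hcd
          have := congrArg (fun v => d⁻¹ • v) h2
          simpa [smul_smul, inv_mul_cancel₀ hd0] using this
        obtain ⟨z, hzind⟩ := companion x hx
        -- z is also independent from x₀
        have hzind₀ : ∀ a b : K, a • x₀ + b • z = 0 → a = 0 ∧ b = 0 := by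
          intro a b hab
          rw [hx₀x, smul_smul] at hab
          obtain ⟨h1, h2⟩ := hzind _ _ hab
          refine ⟨?_, h2⟩
          rcases mul_eq_zero.mp h1 with h | h
          · exact h
          · exact absurd h (mul_ne_zero (inv_ne_zero hd0) (neg_ne_zero.mpr hc0))
        have hz0 : z ≠ 0 := by
          intro h0; subst h0
          have := (hzind 0 1 (by simp)).2; simp at this
        obtain ⟨e, he0, he⟩ := mult z hz0
        have h1 : a = e := same x z hzind a e ha he
        have h2 : lam = e := same x₀ z hzind₀ lam e hlam he
        rw [h1, h2]
    · -- converse: B = lam • A gives equal spans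
      rintro ⟨lam, hlam0, hlam⟩ x hx
      rw [hlam x]
      exact Submodule.span_singleton_smul_eq (IsUnit.mk0 lam hlam0) _
  · -- the conjugation formula
    intro lam hlam0 hlam ρ
    obtain ⟨x, hx⟩ := exists_ne (0 : E)
    have h1 : (h ρ * lam) • A x = (lam * g ρ) • A x := by
      rw [mul_smul, mul_smul, ← hlam x, ← hAsmul, ← hlam (ρ • x), hBsmul]
    have h2 : h ρ * lam = lam * g ρ :=
      smul_left_injective L (hAne x hx) h1
    rw [eq_mul_inv_iff_mul_eq₀ hlam0]
    exact h2
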